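/- arXiv:2008.00846 — 4 statements merged into one kernel-verified Lean document; each statement's English description precedes it below -/
import Mathlib

section
/- Let R > 0 and define w : (0,∞) → ℝ by w(r) = ((1−r²)/(2r))·arctan r − ((1−R²)/(2R))·arctan R. Then w(R) = 0, w(r) → 1/2 − ((1−R²)/(2R))·arctan R as r → 0⁺, and for every r > 0 one has d/dr ( r² · (2/(1+r²)) · w′(r) ) = − r² · (2/(1+r²))³. That is, w solves the three-dimensional radial torsion equation −(r² p(r) w′)′ = r² p(r)³ on (0,R) with w(R) = 0, where p(r) = 2/(1+r²). -/
open Filter Topology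

private lemma hasDerivAt_frac (s : ℝ) (hs : s ≠ 0) :
    HasDerivAt (fun t : ℝ => (1 - t ^ 2) / (2 * t)) (-(1 + s ^ 2) / (2 * s ^ 2)) s := by
  have hden : (2 : ℝ) * s ≠ 0 := by simp [hs]
  have hn : HasDerivAt (fun t : ℝ => 1 - t ^ 2) (-(2 * s)) s := by
    simpa using (hasDerivAt_const s (1:ℝ)).fun_sub (hasDerivAt_pow 2 s)
  have hd : HasDerivAt (fun t : ℝ => 2 * t) 2 s := by
    simpa using (hasDerivAt_id s).const_mul (2:ℝ)
  have : HasDerivAt (fun t : ℝ => (1 - t ^ 2) / (2 * t)) _ s := hn.div hd hden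
  convert this using 1
  field_simp
  ring

private lemma hasDerivAt_main (s : ℝ) (hs : s ≠ 0) :
    HasDerivAt (fun t : ℝ => (1 - t ^ 2) / (2 * t) * Real.arctan t)
      (-(1 + s ^ 2) / (2 * s ^ 2) * Real.arctan s + (1 - s ^ 2) / (2 * s) * (1 / (1 + s ^ 2))) s :=
  (hasDerivAt_frac s hs).mul (Real.hasDerivAt_arctan s)

private lemma one_add_sq_ne (s : ℝ) : (1 : ℝ) + s ^ 2 ≠ 0 := by positivity

private lemma hasDerivAt_F (s : ℝ) :
    HasDerivAt (fun t : ℝ => -Real.arctan t + (t - t ^ 3) / (1 + t ^ 2) ^ 2)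
      (-(1 / (1 + s ^ 2)) +
        ((1 - 3 * s ^ 2) * ((1 + s ^ 2) ^ 2) - (s - s ^ 3) * (2 * (1 + s ^ 2) * (2 * s))) /
          ((1 + s ^ 2) ^ 2) ^ 2) s := by
  have h1 : HasDerivAt (fun t : ℝ => -Real.arctan t) (-(1 / (1 + s ^ 2))) s :=
    (Real.hasDerivAt_arctan s).neg
  have hn : HasDerivAt (fun t : ℝ => t - t ^ 3) (1 - 3 * s ^ 2) s := by
    simpa using (hasDerivAt_id s).fun_sub (hasDerivAt_pow 3 s)
  have hb : HasDerivAt (fun t : ℝ => 1 + t ^ 2) (2 * s) s := by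
    simpa using (hasDerivAt_const s (1:ℝ)).fun_add (hasDerivAt_pow 2 s)
  have hd : HasDerivAt (fun t : ℝ => (1 + t ^ 2) ^ 2) (2 * (1 + s ^ 2) * (2 * s)) s := by
    have : HasDerivAt (fun t : ℝ => (1 + t ^ 2) ^ 2) _ s := hb.pow 2
    convert this using 1
    ring
  have hdne : ((1 : ℝ) + s ^ 2) ^ 2 ≠ 0 := pow_ne_zero _ (one_add_sq_ne s)
  exact h1.add (hn.div hd hdne)

theorem torsion_function_dim_three
    (R : ℝ) (hR : 0 < R)
    (w : ℝ → ℝ)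
    (hw : ∀ r : ℝ, w r =
      (1 - r ^ 2) / (2 * r) * Real.arctan r - (1 - R ^ 2) / (2 * R) * Real.arctan R) :
    w R = 0 ∧
    Tendsto w (𝓝[>] 0) (𝓝 (1 / 2 - (1 - R ^ 2) / (2 * R) * Real.arctan R)) ∧
    ∀ r : ℝ, 0 < r →
      deriv (fun r : ℝ => r ^ 2 * (2 / (1 + r ^ 2)) * deriv w r) r
        = -(r ^ 2 * (2 / (1 + r ^ 2)) ^ 3) := by
  have hwf : w = fun r : ℝ =>
      (1 - r ^ 2) / (2 * r) * Real.arctan r - (1 - R ^ 2) / (2 * R) * Real.arctan R :=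
    funext hw
  refine ⟨by rw [hw]; ring, ?_, ?_⟩
  · -- limit
    have h1 : Tendsto (fun r : ℝ => Real.arctan r / r) (𝓝[>] 0) (𝓝 1) := by
      have h := (Real.hasDerivAt_arctan 0)
      rw [hasDerivAt_iff_tendsto_slope] at h
      have h2 : Tendsto (slope Real.arctan 0) (𝓝[>] 0) (𝓝 1) := by
        have h3 := h.mono_left (nhdsWithin_mono 0 fun x hx => ne_of_gt hx)
        norm_num at h3
        exact h3
      exact Tendsto.congr (fun r => by simp [slope_def_field]) h2
    have h2 : Tendsto (fun r : ℝ => (1 - r ^ 2) / 2) (𝓝[>] 0) (𝓝 (1 / 2)) := by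
      have : Tendsto (fun r : ℝ => (1 - r ^ 2) / 2) (𝓝 0) (𝓝 ((1 - 0 ^ 2) / 2)) :=
        ((continuous_const.sub (continuous_pow 2)).div_const 2).tendsto 0
      simpa using this.mono_left nhdsWithin_le_nhds
    have h3 : Tendsto (fun r : ℝ => (1 - r ^ 2) / 2 * (Real.arctan r / r)) (𝓝[>] 0)
        (𝓝 (1 / 2)) := by simpa using h2.mul h1
    have h4 : Tendsto (fun r : ℝ => (1 - r ^ 2) / (2 * r) * Real.arctan r) (𝓝[>] 0)
        (𝓝 (1 / 2)) := by
      refine h3.congr' ?_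
      filter_upwards [self_mem_nhdsWithin] with r (hr : 0 < r)
      field_simp
    rw [hwf]
    exact h4.sub tendsto_const_nhds
  · intro r hr
    -- deriv w at positive points
    have hderiv : ∀ s : ℝ, s ≠ 0 → deriv w s =
        -(1 + s ^ 2) / (2 * s ^ 2) * Real.arctan s + (1 - s ^ 2) / (2 * s) * (1 / (1 + s ^ 2)) := by
      intro s hs
      rw [hwf]
      exact (((hasDerivAt_main s hs).sub_const _)).deriv
    have hEq : (fun s : ℝ => s ^ 2 * (2 / (1 + s ^ 2)) * deriv w s) =ᶠ[𝓝 r]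
        (fun s : ℝ => -Real.arctan s + (s - s ^ 3) / (1 + s ^ 2) ^ 2) := by
      filter_upwards [isOpen_Ioi.mem_nhds hr] with s (hs : 0 < s)
      rw [hderiv s hs.ne']
      have h1 := one_add_sq_ne s
      field_simp
    rw [hEq.deriv_eq, (hasDerivAt_F r).deriv]
    have h1 := one_add_sq_ne r
    field_simp
    ring
end

section
/- With R(ε) = tan((1−ε)π/2), the function ε ↦ 1/2 − ((1−R(ε)²)/(2R(ε)))·arctan(R(ε)) − 1/(2ε) tends to 0 as ε → 0 from the right. In particular, the maximum value w(0⁺) = 1/2 − ((1−R²)/(2R))·arctan R of the three-dimensional torsion function of the spherical cap Ω_ε satisfies ‖w‖_∞ = 1/(2ε) + O(1) as ε → 0⁺. -/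
open Filter Topology Real

lemma aux_sin_div : Tendsto (fun t : ℝ => Real.sin t / t) (𝓝[>] 0) (𝓝 1) := by
  have h := hasDerivAt_iff_tendsto_slope.mp (Real.hasDerivAt_sin 0)
  rw [Real.cos_zero] at h
  have h2 : Tendsto (slope Real.sin 0) (𝓝[>] 0) (𝓝 1) :=
    h.mono_left (nhdsWithin_mono _ (fun x hx => ne_of_gt hx))
  refine h2.congr (fun t => ?_)
  simp [slope_def_field, div_eq_div_iff]

lemma aux_K : Tendsto (fun t : ℝ => (t * Real.cos t - Real.sin t) / (t * Real.sin t))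
    (𝓝[>] 0) (𝓝 0) := by
  have hlo : Tendsto (fun t : ℝ => -t) (𝓝[>] (0:ℝ)) (𝓝 0) := by
    have : Tendsto (fun t : ℝ => -t) (𝓝 (0:ℝ)) (𝓝 (-0)) := tendsto_id.neg
    rw [neg_zero] at this
    exact this.mono_left nhdsWithin_le_nhds
  have hhi : Tendsto (fun _ : ℝ => (0:ℝ)) (𝓝[>] (0:ℝ)) (𝓝 0) := tendsto_const_nhds
  refine tendsto_of_tendsto_of_tendsto_of_le_of_le' hlo hhi ?_ ?_
  · -- lower bound eventually
    filter_upwards [Ioo_mem_nhdsGT_of_mem (by norm_num : (0:ℝ) ∈ Set.Ico (0:ℝ) 1)]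
      with t ht
    obtain ⟨ht0, ht1⟩ := ht
    have hπ : t < Real.pi := ht1.trans (by linarith [Real.pi_gt_three])
    have hs : 0 < Real.sin t := Real.sin_pos_of_pos_of_lt_pi ht0 hπ
    have hsin_lt : Real.sin t < t := Real.sin_lt ht0
    have hcos : 1 - t ^ 2 / 2 ≤ Real.cos t := Real.one_sub_sq_div_two_le_cos
    have hsin_gt : t - t ^ 3 / 4 < Real.sin t := by
      have := Real.sin_gt_sub_cube ht0; nlinarith [pow_pos ht0 3]
    have hD : 0 < t * Real.sin t := mul_pos ht0 hs
    rw [le_div_iff₀ hD]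
    have h5 : 0 ≤ t ^ 3 * (1 - t ^ 2) :=
      mul_nonneg (by positivity) (by nlinarith)
    nlinarith [mul_lt_mul_of_pos_left hsin_gt (mul_pos ht0 ht0),
      mul_le_mul_of_nonneg_left hcos ht0.le]
  · -- upper bound eventually
    filter_upwards [Ioo_mem_nhdsGT_of_mem (by norm_num : (0:ℝ) ∈ Set.Ico (0:ℝ) 1)]
      with t ht
    obtain ⟨ht0, ht1⟩ := ht
    have hπ2 : t < Real.pi / 2 := ht1.trans (by linarith [Real.pi_gt_three])
    have hπ : t < Real.pi := ht1.trans (by linarith [Real.pi_gt_three])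
    have hs : 0 < Real.sin t := Real.sin_pos_of_pos_of_lt_pi ht0 hπ
    have hc : 0 < Real.cos t := Real.cos_pos_of_mem_Ioo ⟨by linarith, hπ2⟩
    have htan : t < Real.tan t := Real.lt_tan ht0 hπ2
    rw [Real.tan_eq_sin_div_cos, lt_div_iff₀ hc] at htan
    have hD : 0 < t * Real.sin t := mul_pos ht0 hs
    exact div_nonpos_of_nonpos_of_nonneg (by linarith) hD.le

lemma aux_map : Tendsto (fun ε : ℝ => Real.pi * ε) (𝓝[>] (0:ℝ)) (𝓝[>] (0:ℝ)) := by
  refine tendsto_nhdsWithin_of_tendsto_nhds_of_eventually_within _ ?_ ?_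
  · have : Tendsto (fun ε : ℝ => Real.pi * ε) (𝓝 0) (𝓝 (Real.pi * 0)) :=
      (tendsto_const_nhds.mul tendsto_id)
    simpa using this.mono_left nhdsWithin_le_nhds
  · filter_upwards [self_mem_nhdsWithin] with ε (hε : 0 < ε)
    exact mul_pos Real.pi_pos hε

theorem torsion_sup_dim_three_asymptotics :
    Tendsto
      (fun ε : ℝ =>
        1 / 2
          - (1 - Real.tan ((1 - ε) * Real.pi / 2) ^ 2)
              / (2 * Real.tan ((1 - ε) * Real.pi / 2))
              * Real.arctan (Real.tan ((1 - ε) * Real.pi / 2))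
          - 1 / (2 * ε))
      (𝓝[>] 0) (𝓝 0) := by
  -- the auxiliary model function
  set H : ℝ → ℝ := fun ε =>
    1 / 2 + (Real.pi / 2) *
      ((Real.pi * ε * Real.cos (Real.pi * ε) - Real.sin (Real.pi * ε)) /
        (Real.pi * ε * Real.sin (Real.pi * ε)))
      - (Real.cos (Real.pi * ε) / 2) * (Real.pi * ε / Real.sin (Real.pi * ε)) with hH
  have hKc : Tendsto (fun ε : ℝ =>
      (Real.pi * ε * Real.cos (Real.pi * ε) - Real.sin (Real.pi * ε)) /
        (Real.pi * ε * Real.sin (Real.pi * ε))) (𝓝[>] 0) (𝓝 0) := aux_K.comp aux_map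
  have hsd : Tendsto (fun ε : ℝ => Real.pi * ε / Real.sin (Real.pi * ε)) (𝓝[>] 0) (𝓝 1) := by
    have h1 : Tendsto (fun ε : ℝ => Real.sin (Real.pi * ε) / (Real.pi * ε)) (𝓝[>] 0) (𝓝 1) :=
      aux_sin_div.comp aux_map
    have := h1.inv₀ one_ne_zero
    rw [inv_one] at this
    refine this.congr (fun ε => ?_)
    simp [one_div]
  have hc : Tendsto (fun ε : ℝ => Real.cos (Real.pi * ε)) (𝓝[>] 0) (𝓝 1) := by
    have : Tendsto (fun ε : ℝ => Real.cos (Real.pi * ε)) (𝓝 0) (𝓝 (Real.cos (Real.pi * 0))) :=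
      (Real.continuous_cos.comp (continuous_const.mul continuous_id)).tendsto 0
    simpa using this.mono_left nhdsWithin_le_nhds
  have hHt : Tendsto H (𝓝[>] 0) (𝓝 0) := by
    have : Tendsto H (𝓝[>] 0)
        (𝓝 (1 / 2 + (Real.pi / 2) * 0 - (1 / 2) * 1)) := by
      exact ((tendsto_const_nhds.add (tendsto_const_nhds.mul hKc)).sub
        ((hc.div_const 2).mul hsd))
    simpa using this
  refine hHt.congr' ?_
  filter_upwards [Ioo_mem_nhdsGT_of_mem (by norm_num : (0:ℝ) ∈ Set.Ico (0:ℝ) (1/2))]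
    with ε hε
  obtain ⟨hε0, hε2⟩ := hε
  have hπ := Real.pi_pos
  set θ := (1 - ε) * Real.pi / 2 with hθdef
  have hθ1 : -(Real.pi / 2) < θ := by rw [hθdef]; nlinarith
  have hθ2 : θ < Real.pi / 2 := by rw [hθdef]; nlinarith
  have hθ0 : 0 < θ := by rw [hθdef]; nlinarith
  have harctan : Real.arctan (Real.tan θ) = θ := Real.arctan_tan hθ1 hθ2
  have hcosθ : 0 < Real.cos θ := Real.cos_pos_of_mem_Ioo ⟨hθ1, hθ2⟩
  have hsinθ : 0 < Real.sin θ := Real.sin_pos_of_pos_of_lt_pi hθ0 (by linarith)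
  have h2θ : 2 * θ = Real.pi - Real.pi * ε := by rw [hθdef]; ring
  have hcos2 : Real.cos θ ^ 2 - Real.sin θ ^ 2 = -Real.cos (Real.pi * ε) := by
    rw [← Real.cos_two_mul', h2θ, Real.cos_pi_sub]
  have hsin2 : 2 * Real.sin θ * Real.cos θ = Real.sin (Real.pi * ε) := by
    rw [← Real.sin_two_mul, h2θ, Real.sin_pi_sub]
  have hs : 0 < Real.sin (Real.pi * ε) := by
    rw [← hsin2]; positivity
  have htan : Real.tan θ = Real.sin θ / Real.cos θ := Real.tan_eq_sin_div_cos θ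
  -- now the algebraic identity
  rw [hH, harctan, htan]
  have hεne : ε ≠ 0 := ne_of_gt hε0
  have hsne : Real.sin (Real.pi * ε) ≠ 0 := ne_of_gt hs
  have hπne : Real.pi ≠ 0 := ne_of_gt hπ
  have hcθne : Real.cos θ ≠ 0 := ne_of_gt hcosθ
  have hsθne : Real.sin θ ≠ 0 := ne_of_gt hsinθ
  have key : (1 - (Real.sin θ / Real.cos θ) ^ 2) / (2 * (Real.sin θ / Real.cos θ))
      = -Real.cos (Real.pi * ε) / Real.sin (Real.pi * ε) := by
    rw [← hcos2, ← hsin2]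
    have hpyth : Real.sin θ ^ 2 + Real.cos θ ^ 2 = 1 := Real.sin_sq_add_cos_sq θ
    field_simp
  rw [key, hθdef]
  field_simp
  ring
end

section
/- For every fixed integer j ≥ 2, the function ε ↦ (1/ε)·∫₀^{(1−ε)π} sin(jθ/(1−ε))·sin θ dθ tends to (−1)^{j+1}·π·j/(j²−1) as ε → 0 from the right. In particular, for j ≥ 2 the integral is of exact order ε as ε → 0⁺. -/
open Filter Topology

lemma my_integral_sin_mul_sin (a : ℝ) (ha1 : a - 1 ≠ 0) (ha2 : a + 1 ≠ 0) (L : ℝ) :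
    ∫ θ in (0:ℝ)..L, Real.sin (a * θ) * Real.sin θ
      = (Real.sin ((a - 1) * L) / (a - 1) - Real.sin ((a + 1) * L) / (a + 1)) / 2 := by
  have key : ∀ θ ∈ Set.uIcc (0:ℝ) L,
      HasDerivAt (fun t => (Real.sin ((a - 1) * t) / (a - 1)
          - Real.sin ((a + 1) * t) / (a + 1)) / 2)
        (Real.sin (a * θ) * Real.sin θ) θ := by
    intro θ _
    have h1 : HasDerivAt (fun t => Real.sin ((a - 1) * t)) (Real.cos ((a - 1) * θ) * (a - 1)) θ :=
      (Real.hasDerivAt_sin _).comp θ (by simpa using (hasDerivAt_id θ).const_mul (a - 1))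
    have h2 : HasDerivAt (fun t => Real.sin ((a + 1) * t)) (Real.cos ((a + 1) * θ) * (a + 1)) θ :=
      (Real.hasDerivAt_sin _).comp θ (by simpa using (hasDerivAt_id θ).const_mul (a + 1))
    have h := ((h1.div_const (a - 1)).sub (h2.div_const (a + 1))).div_const 2
    refine h.congr_deriv ?_
    rw [mul_div_assoc, mul_div_assoc, div_self ha1, div_self ha2, mul_one, mul_one]
    have hc : Real.cos ((a - 1) * θ) - Real.cos ((a + 1) * θ)
        = 2 * Real.sin (a * θ) * Real.sin θ := by
      rw [Real.cos_sub_cos]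
      have e1 : ((a - 1) * θ + (a + 1) * θ) / 2 = a * θ := by ring
      have e2 : ((a - 1) * θ - (a + 1) * θ) / 2 = -θ := by ring
      rw [e1, e2, Real.sin_neg]; ring
    rw [hc]; ring
  rw [intervalIntegral.integral_eq_sub_of_hasDerivAt key
    (by apply Continuous.intervalIntegrable; continuity)]
  simp

theorem inner_product_asymptotics
    (j : ℕ) (hj : 2 ≤ j) :
    Tendsto
      (fun ε : ℝ =>
        (1 / ε) * ∫ θ in (0 : ℝ)..((1 - ε) * Real.pi),
          Real.sin ((j : ℝ) * θ / (1 - ε)) * Real.sin θ)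
      (𝓝[>] 0)
      (𝓝 ((-1 : ℝ) ^ (j + 1) * Real.pi * (j : ℝ) / ((j : ℝ) ^ 2 - 1))) := by
  have hj2 : (2:ℝ) ≤ (j:ℝ) := by exact_mod_cast hj
  have hjsq : ((j:ℝ)^2 - 1) ≠ 0 := by nlinarith
  -- limit of sin(ε*π)/ε
  have hsin : Tendsto (fun ε : ℝ => Real.sin (ε * Real.pi) / ε) (𝓝[>] (0:ℝ)) (𝓝 Real.pi) := by
    have h0 : Tendsto (fun x : ℝ => Real.sin x / x) (𝓝[≠] (0:ℝ)) (𝓝 1) := by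
      simpa [slope_fun_def, Real.sin_zero, div_eq_inv_mul] using
        ((hasDerivAt_iff_tendsto_slope.mp (Real.hasDerivAt_sin 0)))
    have hmap : Tendsto (fun ε : ℝ => ε * Real.pi) (𝓝[>] (0:ℝ)) (𝓝[≠] (0:ℝ)) := by
      apply tendsto_nhdsWithin_of_tendsto_nhds_of_eventually_within
      · have h : Tendsto (fun ε : ℝ => ε * Real.pi) (𝓝 (0:ℝ)) (𝓝 ((0:ℝ) * Real.pi)) :=
          tendsto_id.mul_const Real.pi
        rw [zero_mul] at h
        exact h.mono_left nhdsWithin_le_nhds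
      · filter_upwards [self_mem_nhdsWithin] with ε (hε : 0 < ε)
        exact ne_of_gt (mul_pos hε Real.pi_pos)
    have := (h0.comp hmap).mul_const Real.pi
    rw [one_mul] at this
    apply this.congr'
    filter_upwards [self_mem_nhdsWithin] with ε (hε : 0 < ε)
    simp only [Function.comp_apply]
    field_simp
  have hrat : Tendsto (fun ε : ℝ => (-1:ℝ)^(j+1) * ((j:ℝ) * (1 - ε) / ((j:ℝ)^2 - (1 - ε)^2)))
      (𝓝[>] (0:ℝ)) (𝓝 ((-1:ℝ)^(j+1) * ((j:ℝ) / ((j:ℝ)^2 - 1)))) := by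
    have : ContinuousAt (fun ε : ℝ => (-1:ℝ)^(j+1) * ((j:ℝ) * (1 - ε) / ((j:ℝ)^2 - (1 - ε)^2))) 0 := by
      apply ContinuousAt.mul continuousAt_const
      apply ContinuousAt.div
      · fun_prop
      · fun_prop
      · simpa using hjsq
    have h := this.tendsto.mono_left (nhdsWithin_le_nhds (s := Set.Ioi (0:ℝ)))
    simpa using h
  have hprod := hsin.mul hrat
  have hlim : Real.pi * ((-1:ℝ)^(j+1) * ((j:ℝ) / ((j:ℝ)^2 - 1)))
      = (-1 : ℝ) ^ (j + 1) * Real.pi * (j : ℝ) / ((j : ℝ) ^ 2 - 1) := by ring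
  rw [hlim] at hprod
  apply hprod.congr'
  filter_upwards [Ioo_mem_nhdsGT_of_mem (Set.left_mem_Ico.mpr one_pos)] with ε hε
  obtain ⟨hε0, hε1⟩ := hε
  have h1ε : (0:ℝ) < 1 - ε := by linarith
  have h1εne : (1:ℝ) - ε ≠ 0 := ne_of_gt h1ε
  set a : ℝ := (j:ℝ) / (1 - ε) with ha
  have haj : (1 - ε) * a = (j:ℝ) := by rw [ha]; field_simp
  have ha1 : a - 1 ≠ 0 := by
    have : (1:ℝ) < a := by
      rw [ha, lt_div_iff₀ h1ε]; linarith
    linarith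
  have ha2 : a + 1 ≠ 0 := by
    have : (0:ℝ) < a := div_pos (by linarith) h1ε
    linarith
  have hrw : ∀ θ : ℝ, (j:ℝ) * θ / (1 - ε) = a * θ := by
    intro θ; rw [ha]; ring
  simp only [hrw]
  rw [my_integral_sin_mul_sin a ha1 ha2]
  have e1 : (a - 1) * ((1 - ε) * Real.pi) = (j:ℝ) * Real.pi - (1 - ε) * Real.pi := by
    linear_combination Real.pi * haj
  have e2 : (a + 1) * ((1 - ε) * Real.pi) = (j:ℝ) * Real.pi + (1 - ε) * Real.pi := by
    linear_combination Real.pi * haj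
  have esin : Real.sin ((1 - ε) * Real.pi) = Real.sin (ε * Real.pi) := by
    rw [show (1 - ε) * Real.pi = Real.pi - ε * Real.pi by ring, Real.sin_pi_sub]
  rw [e1, e2, Real.sin_nat_mul_pi_sub, add_comm ((j:ℝ) * Real.pi), Real.sin_add_nat_mul_pi, esin]
  -- now pure algebra
  have hja : (j:ℝ) - (1 - ε) ≠ 0 := by nlinarith
  have hjb : (j:ℝ) + (1 - ε) ≠ 0 := by nlinarith
  have hden : (j:ℝ)^2 - (1 - ε)^2 ≠ 0 := by
    have : (j:ℝ)^2 - (1 - ε)^2 = ((j:ℝ) - (1 - ε)) * ((j:ℝ) + (1 - ε)) := by ring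
    rw [this]; exact mul_ne_zero hja hjb
  have haval1 : a - 1 = ((j:ℝ) - (1 - ε)) / (1 - ε) := by rw [ha]; field_simp
  have haval2 : a + 1 = ((j:ℝ) + (1 - ε)) / (1 - ε) := by rw [ha]; field_simp
  rw [haval1, haval2, pow_succ]
  field_simp
  ring
end

section
/- For all nonnegative integers n and k, the function ζ ↦ ψ(−n−ζ)/Γ(−k−ζ) tends to (−1)^{k+1}·k! as ζ → 0 along nonzero real values, where Γ is the Gamma function and ψ(z) := Γ′(z)/Γ(z) is the digamma function. -/
open Filter Topology

/-- If `ζ` is a small nonzero real, `-a - ζ` is not a nonpositive integer. -/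
lemma aux_ne (a : ℕ) {ζ : ℝ} (h0 : ζ ≠ 0) (h1 : |ζ| < 1) (m : ℕ) :
    (-(a : ℝ) - ζ) ≠ -(m : ℝ) := by
  intro hm
  apply h0
  have hz : ζ = (((m : ℤ) - (a : ℤ) : ℤ) : ℝ) := by push_cast; linarith
  have h2 : |((m : ℤ) - (a : ℤ))| < 1 := by
    have : |(((m : ℤ) - (a : ℤ) : ℤ) : ℝ)| < 1 := by rw [← hz]; exact h1
    exact_mod_cast this
  have h3 : (m : ℤ) - (a : ℤ) = 0 := by
    have := abs_lt.mp h2; omega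
  rw [hz, h3]; simp

/-- Recurrence for the digamma function. -/
lemma psi_rec {s : ℝ} (hs : ∀ m : ℕ, s ≠ -(m : ℝ)) :
    deriv Real.Gamma s / Real.Gamma s
      = deriv Real.Gamma (s + 1) / Real.Gamma (s + 1) - 1 / s := by
  have hs0 : s ≠ 0 := by simpa using hs 0
  have hs1 : ∀ m : ℕ, s + 1 ≠ -(m : ℝ) := by
    intro m h
    exact hs (m + 1) (by push_cast; linarith)
  have hG : Real.Gamma s ≠ 0 := Real.Gamma_ne_zero hs
  have hd : DifferentiableAt ℝ Real.Gamma s := Real.differentiableAt_Gamma hs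
  have hd1 : DifferentiableAt ℝ Real.Gamma (s + 1) := Real.differentiableAt_Gamma hs1
  have h1 : HasDerivAt (fun x : ℝ => Real.Gamma (x + 1)) (deriv Real.Gamma (s + 1)) s := by
    simpa [Function.comp_def] using (hd1.hasDerivAt.comp s ((hasDerivAt_id s).add_const 1))
  have h2 : HasDerivAt (fun x : ℝ => x * Real.Gamma x)
      (1 * Real.Gamma s + s * deriv Real.Gamma s) s :=
    (hasDerivAt_id s).mul hd.hasDerivAt
  have heq : (fun x : ℝ => Real.Gamma (x + 1)) =ᶠ[𝓝 s] (fun x : ℝ => x * Real.Gamma x) := by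
    filter_upwards [isOpen_ne.mem_nhds hs0] with x hx
    exact Real.Gamma_add_one hx
  have h2' : HasDerivAt (fun x : ℝ => Real.Gamma (x + 1))
      (1 * Real.Gamma s + s * deriv Real.Gamma s) s := h2.congr_of_eventuallyEq heq
  have h3 : deriv Real.Gamma (s + 1) = Real.Gamma s + s * deriv Real.Gamma s := by
    have := h1.unique h2'
    linarith
  have hGs1 : Real.Gamma (s + 1) = s * Real.Gamma s := Real.Gamma_add_one hs0
  rw [h3, hGs1]
  field_simp
  ring

/-- Continuity of the digamma function at 1. -/
lemma contAt_psi_one :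
    ContinuousAt (fun x : ℝ => deriv Real.Gamma x / Real.Gamma x) 1 := by
  have hU : IsOpen {s : ℂ | 0 < s.re} := isOpen_lt continuous_const Complex.continuous_re
  have hdiff : DifferentiableOn ℂ Complex.Gamma {s : ℂ | 0 < s.re} := by
    intro s hs
    refine (Complex.differentiableAt_Gamma s fun m => ?_).differentiableWithinAt
    intro h
    rw [Set.mem_setOf_eq, h] at hs
    simp only [Complex.neg_re, Complex.natCast_re] at hs
    have : (0 : ℝ) ≤ (m : ℝ) := Nat.cast_nonneg m
    linarith
  have han : AnalyticOnNhd ℂ (deriv Complex.Gamma) {s : ℂ | 0 < s.re} :=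
    (hdiff.analyticOnNhd hU).deriv
  have hc : ContinuousAt (deriv Complex.Gamma) 1 :=
    (han 1 (by norm_num)).continuousAt
  have hev : ∀ᶠ x : ℝ in 𝓝 1, deriv Real.Gamma x = (deriv Complex.Gamma x).re := by
    filter_upwards [eventually_gt_nhds (by norm_num : (0 : ℝ) < 1)] with x hx
    have hx' : ∀ m : ℕ, (x : ℂ) ≠ -(m : ℕ) := by
      intro m h
      have : x = -(m : ℝ) := by exact_mod_cast h
      have : (0 : ℝ) ≤ (m : ℝ) := Nat.cast_nonneg m
      linarith [‹x = -(m : ℝ)›]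
    have hder := ((Complex.differentiableAt_Gamma (x : ℂ) hx').hasDerivAt).real_of_complex
    have : deriv (fun y : ℝ => (Complex.Gamma (y : ℂ)).re) x = (deriv Complex.Gamma x).re :=
      hder.deriv
    rw [← this]
    rfl
  have hcr : ContinuousAt (fun x : ℝ => (deriv Complex.Gamma x).re) 1 := by
    have hc1 : ContinuousAt (deriv Complex.Gamma) (((1 : ℝ) : ℂ)) := by simpa using hc
    have h1 : ContinuousAt (fun x : ℝ => deriv Complex.Gamma (x : ℂ)) 1 :=
      hc1.comp Complex.continuous_ofReal.continuousAt
    exact Complex.continuous_re.continuousAt.comp h1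
  have hev' : (fun x : ℝ => (deriv Complex.Gamma x).re) =ᶠ[𝓝 (1:ℝ)] deriv Real.Gamma := by
    filter_upwards [hev] with x h; exact h.symm
  have hcd : ContinuousAt (deriv Real.Gamma) 1 := hcr.congr hev'
  have hG1 : Real.Gamma 1 ≠ 0 := by rw [Real.Gamma_one]; norm_num
  have hGc : ContinuousAt Real.Gamma 1 :=
    (Real.differentiableAt_Gamma (by
      intro m h
      have : (0 : ℝ) ≤ (m : ℝ) := Nat.cast_nonneg m
      linarith)).continuousAt
  exact hcd.div hGc hG1

lemma eventually_small : ∀ᶠ ζ : ℝ in 𝓝[≠] (0 : ℝ), ζ ≠ 0 ∧ |ζ| < 1 := by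
  have h1 : ∀ᶠ ζ : ℝ in 𝓝[≠] (0 : ℝ), |ζ| < 1 := by
    apply eventually_nhdsWithin_of_eventually_nhds
    have := eventually_abs_sub_lt (0 : ℝ) one_pos
    simpa using this
  filter_upwards [self_mem_nhdsWithin, h1] with ζ h2 h3
  exact ⟨h2, h3⟩

/-- `ζ ↦ ζ · ψ(-n - ζ)` tends to 1. -/
lemma lemA (n : ℕ) :
    Tendsto (fun ζ : ℝ => ζ * (deriv Real.Gamma (-(n : ℝ) - ζ) / Real.Gamma (-(n : ℝ) - ζ)))
      (𝓝[≠] 0) (𝓝 1) := by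
  induction n with
  | zero =>
    have hsub : Tendsto (fun ζ : ℝ => (1 : ℝ) - ζ) (𝓝 0) (𝓝 1) := by
      have : Tendsto (fun ζ : ℝ => (1 : ℝ) - ζ) (𝓝 0) (𝓝 (1 - 0)) :=
        tendsto_const_nhds.sub tendsto_id
      simpa using this
    have hpsi : Tendsto (fun ζ : ℝ => deriv Real.Gamma (1 - ζ) / Real.Gamma (1 - ζ)) (𝓝 0)
        (𝓝 (deriv Real.Gamma 1 / Real.Gamma 1)) := contAt_psi_one.tendsto.comp hsub
    have h1 : Tendsto (fun ζ : ℝ =>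
        ζ * (deriv Real.Gamma (1 - ζ) / Real.Gamma (1 - ζ)) + 1) (𝓝 0) (𝓝 1) := by
      have := (tendsto_id.mul hpsi).add (tendsto_const_nhds (x := (1 : ℝ)))
      simpa using this
    refine Tendsto.congr' ?_ (h1.mono_left nhdsWithin_le_nhds)
    filter_upwards [eventually_small] with ζ hζ
    obtain ⟨h0, hlt⟩ := hζ
    have hs : ∀ m : ℕ, -((0 : ℕ) : ℝ) - ζ ≠ -(m : ℝ) := aux_ne 0 h0 hlt
    have hrec := psi_rec hs
    rw [show -((0 : ℕ) : ℝ) - ζ + 1 = 1 - ζ by push_cast; ring] at hrec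
    rw [hrec]
    have hz : -((0 : ℕ) : ℝ) - ζ = -ζ := by push_cast; ring
    rw [hz, mul_sub]
    have h4 : ζ * (1 / -ζ) = -1 := by field_simp
    rw [h4]
    ring
  | succ n ih =>
    have hlin : Tendsto (fun ζ : ℝ => ζ / (-((n : ℝ) + 1) - ζ)) (𝓝 0) (𝓝 0) := by
      have hden : Tendsto (fun ζ : ℝ => -((n : ℝ) + 1) - ζ) (𝓝 0) (𝓝 (-((n : ℝ) + 1) - 0)) :=
        tendsto_const_nhds.sub tendsto_id
      have hne : -((n : ℝ) + 1) - 0 ≠ 0 := by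
        have : (0 : ℝ) ≤ (n : ℝ) := Nat.cast_nonneg n
        intro h; rw [sub_zero] at h; nlinarith
      have := (tendsto_id (x := 𝓝 (0 : ℝ))).div hden hne
      simpa [Pi.div_def] using this
    have h1 : Tendsto (fun ζ : ℝ =>
        ζ * (deriv Real.Gamma (-(n : ℝ) - ζ) / Real.Gamma (-(n : ℝ) - ζ))
          - ζ / (-((n : ℝ) + 1) - ζ)) (𝓝[≠] 0) (𝓝 1) := by
      have := ih.sub (hlin.mono_left nhdsWithin_le_nhds)
      simpa using this
    refine Tendsto.congr' ?_ h1
    filter_upwards [eventually_small] with ζ hζ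
    obtain ⟨h0, hlt⟩ := hζ
    have hs : ∀ m : ℕ, -((n + 1 : ℕ) : ℝ) - ζ ≠ -(m : ℝ) := aux_ne (n + 1) h0 hlt
    have hrec := psi_rec hs
    rw [show -((n + 1 : ℕ) : ℝ) - ζ + 1 = -(n : ℝ) - ζ by push_cast; ring] at hrec
    rw [hrec, show -((n + 1 : ℕ) : ℝ) - ζ = -((n : ℝ) + 1) - ζ by push_cast; ring]
    ring

/-- `ζ ↦ 1/(ζ · Γ(-k - ζ))` tends to `(-1)^(k+1) k!`. -/
lemma lemB (k : ℕ) :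
    Tendsto (fun ζ : ℝ => 1 / (ζ * Real.Gamma (-(k : ℝ) - ζ)))
      (𝓝[≠] 0) (𝓝 ((-1 : ℝ) ^ (k + 1) * (Nat.factorial k : ℝ))) := by
  induction k with
  | zero =>
    have hsub : Tendsto (fun ζ : ℝ => (1 : ℝ) - ζ) (𝓝 0) (𝓝 1) := by
      have : Tendsto (fun ζ : ℝ => (1 : ℝ) - ζ) (𝓝 0) (𝓝 (1 - 0)) :=
        tendsto_const_nhds.sub tendsto_id
      simpa using this
    have hGc : ContinuousAt Real.Gamma 1 := by
      refine (Real.differentiableAt_Gamma ?_).continuousAt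
      intro m h
      have : (0 : ℝ) ≤ (m : ℝ) := Nat.cast_nonneg m
      linarith
    have hG1 : Tendsto (fun ζ : ℝ => Real.Gamma (1 - ζ)) (𝓝 0) (𝓝 1) := by
      have := hGc.tendsto.comp hsub
      simpa [Real.Gamma_one, Function.comp_def] using this
    have h1 : Tendsto (fun ζ : ℝ => -1 / Real.Gamma (1 - ζ)) (𝓝 0) (𝓝 (-1)) := by
      have := (tendsto_const_nhds (x := (-1 : ℝ))).div hG1 one_ne_zero
      simpa [Pi.div_def] using this
    have h1' : Tendsto (fun ζ : ℝ => -1 / Real.Gamma (1 - ζ)) (𝓝[≠] 0)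
        (𝓝 ((-1 : ℝ) ^ (0 + 1) * (Nat.factorial 0 : ℝ))) := by
      simpa [Nat.factorial] using h1.mono_left nhdsWithin_le_nhds
    refine Tendsto.congr' ?_ h1'
    filter_upwards [eventually_small] with ζ hζ
    obtain ⟨h0, hlt⟩ := hζ
    have hne : Real.Gamma (-ζ) ≠ 0 := by
      refine Real.Gamma_ne_zero fun m => ?_
      have := aux_ne 0 h0 hlt m
      simpa using this
    have hs0 : (-ζ : ℝ) ≠ 0 := neg_ne_zero.mpr h0
    have hG : Real.Gamma (1 - ζ) = -ζ * Real.Gamma (-ζ) := by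
      have := Real.Gamma_add_one hs0
      rw [show -ζ + 1 = 1 - ζ by ring] at this
      exact this
    rw [hG, show -((0 : ℕ) : ℝ) - ζ = -ζ by push_cast; ring]
    field_simp
  | succ k ih =>
    have h2 : Tendsto (fun ζ : ℝ => -((k : ℝ) + 1) - ζ) (𝓝[≠] 0) (𝓝 (-((k : ℝ) + 1))) := by
      have : Tendsto (fun ζ : ℝ => -((k : ℝ) + 1) - ζ) (𝓝 0) (𝓝 (-((k : ℝ) + 1) - 0)) :=
        tendsto_const_nhds.sub tendsto_id
      simpa using this.mono_left nhdsWithin_le_nhds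
    have h1 := ih.mul h2
    have hval : ((-1 : ℝ) ^ (k + 1) * (Nat.factorial k : ℝ)) * (-((k : ℝ) + 1))
        = (-1 : ℝ) ^ (k + 1 + 1) * (Nat.factorial (k + 1) : ℝ) := by
      rw [pow_succ (-1 : ℝ) (k + 1), Nat.factorial_succ]
      push_cast
      ring
    rw [hval] at h1
    refine Tendsto.congr' ?_ h1
    filter_upwards [eventually_small] with ζ hζ
    obtain ⟨h0, hlt⟩ := hζ
    have hs : ∀ m : ℕ, -((k + 1 : ℕ) : ℝ) - ζ ≠ -(m : ℝ) := aux_ne (k + 1) h0 hlt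
    have hs0 : -((k + 1 : ℕ) : ℝ) - ζ ≠ 0 := by simpa using hs 0
    have hne : Real.Gamma (-((k + 1 : ℕ) : ℝ) - ζ) ≠ 0 := Real.Gamma_ne_zero hs
    have hG : Real.Gamma (-(k : ℝ) - ζ)
        = (-((k + 1 : ℕ) : ℝ) - ζ) * Real.Gamma (-((k + 1 : ℕ) : ℝ) - ζ) := by
      have := Real.Gamma_add_one hs0
      rw [show -((k + 1 : ℕ) : ℝ) - ζ + 1 = -(k : ℝ) - ζ by push_cast; ring] at this
      exact this
    have hcast : -((k + 1 : ℕ) : ℝ) - ζ = -((k : ℝ) + 1) - ζ := by push_cast; ring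
    rw [hG, ← hcast, one_div_mul_eq_div,
      show ζ * ((-((k + 1 : ℕ) : ℝ) - ζ) * Real.Gamma (-((k + 1 : ℕ) : ℝ) - ζ))
          = (-((k + 1 : ℕ) : ℝ) - ζ) * (ζ * Real.Gamma (-((k + 1 : ℕ) : ℝ) - ζ)) by ring,
      div_mul_cancel_left₀ hs0, one_div]

theorem digamma_over_gamma_limit (n k : ℕ) :
    Tendsto
      (fun ζ : ℝ =>
        (deriv Real.Gamma (-(n : ℝ) - ζ) / Real.Gamma (-(n : ℝ) - ζ))
          / Real.Gamma (-(k : ℝ) - ζ))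
      (𝓝[≠] 0) (𝓝 ((-1 : ℝ) ^ (k + 1) * (Nat.factorial k : ℝ))) := by
  have h := (lemA n).mul (lemB k)
  rw [one_mul] at h
  refine Tendsto.congr' ?_ h
  filter_upwards [self_mem_nhdsWithin] with ζ h0
  rw [mul_one_div, mul_div_mul_left _ _ h0]
end
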